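/- Let β : V × V → W^{p,1} be a flat symmetric bilinear form into a Lorentzian space, with N(β) = {0}, and suppose S(β) is degenerate with S(β) ∩ S(β)^⊥ = span{ν}, ν null. Suppose there is F ∈ W null with ⟨β(X,Y),F⟩ = −⟨X,Y⟩ and ⟨ν,F⟩ = −1. Then β' = β − ⟨·,·⟩ν is a flat bilinear form whose span S(β') is contained in span{ν,F}^⊥ and hence is positive definite (Riemannian). -/

import Mathlib

open scoped RealInnerProductSpace

/-- Coordinate-level key lemma: orthogonal complement of a timelike vector is
positive definite. -/
lemma lorentz_key {p : ℕ} (c t : Fin (p + 1) → ℝ)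
    (ht : (∑ i : Fin (p + 1), (if (i : ℕ) = p then (-1 : ℝ) else 1) * t i * t i) < 0)
    (hc : (∑ i : Fin (p + 1), (if (i : ℕ) = p then (-1 : ℝ) else 1) * c i * t i) = 0)
    (hcne : c ≠ 0) :
    0 < ∑ i : Fin (p + 1), (if (i : ℕ) = p then (-1 : ℝ) else 1) * c i * c i := by
  have expand : ∀ d e : Fin (p + 1) → ℝ,
      (∑ i : Fin (p + 1), (if (i : ℕ) = p then (-1 : ℝ) else 1) * d i * e i)
        = (∑ i : Fin p, d i.castSucc * e i.castSucc) - d (Fin.last p) * e (Fin.last p) := by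
    intro d e
    rw [Fin.sum_univ_castSucc]
    have h1 : ∀ i : Fin p, ((i.castSucc : Fin (p+1)) : ℕ) ≠ p := by
      intro i; simpa using i.isLt.ne
    have h2 : ((Fin.last p : Fin (p+1)) : ℕ) = p := rfl
    simp only [h2, if_pos rfl]
    rw [sub_eq_add_neg]
    congr 1
    · exact Finset.sum_congr rfl fun i _ => by rw [if_neg (h1 i), one_mul]
    · norm_num
  rw [expand] at ht hc ⊢
  set A := ∑ i : Fin p, c i.castSucc * c i.castSucc with hA
  set T := ∑ i : Fin p, t i.castSucc * t i.castSucc with hT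
  set ap := c (Fin.last p)
  set tp := t (Fin.last p)
  have hTnn : 0 ≤ T := Finset.sum_nonneg fun i _ => mul_self_nonneg _
  have hAnn : 0 ≤ A := Finset.sum_nonneg fun i _ => mul_self_nonneg _
  have htp : T < tp * tp := by linarith
  have htpne : tp ≠ 0 := by
    intro h; rw [h] at htp; nlinarith
  have hCS : (∑ i : Fin p, c i.castSucc * t i.castSucc) ^ 2 ≤ A * T := by
    have := Finset.sum_mul_sq_le_sq_mul_sq Finset.univ
      (fun i : Fin p => c i.castSucc) (fun i : Fin p => t i.castSucc)
    simpa [hA, hT, sq] using this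
  have hdot : (∑ i : Fin p, c i.castSucc * t i.castSucc) = ap * tp := by linarith
  rw [hdot] at hCS
  rcases eq_or_lt_of_le hAnn with hA0 | hA0
  · -- A = 0 : then all spatial coords are 0, and ap = 0, contradicting c ≠ 0
    exfalso
    have hz : ∀ i : Fin p, c i.castSucc = 0 := by
      intro i
      have := Finset.sum_eq_zero_iff_of_nonneg
        (fun j (_ : j ∈ Finset.univ) => mul_self_nonneg (c (Fin.castSucc j)))
        |>.mp hA0.symm i (Finset.mem_univ i)
      exact mul_self_eq_zero.mp this
    have hap : ap = 0 := by
      have : (ap * tp) ^ 2 ≤ 0 := by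
        rw [← hA0] at hCS; simpa using hCS
      have := pow_eq_zero_iff (n := 2) (by norm_num) |>.mp (le_antisymm this (sq_nonneg _))
      exact (mul_eq_zero.mp this).resolve_right htpne
    apply hcne
    funext i
    exact Fin.lastCases hap hz i
  · -- A > 0
    have : (ap * tp) ^ 2 < A * (tp * tp) := by nlinarith
    nlinarith [sq_nonneg ap, mul_pos (mul_self_pos.mpr htpne) hA0]

theorem shifted_form_flat_riemannian_span
    {V W : Type*} [NormedAddCommGroup V] [InnerProductSpace ℝ V] [FiniteDimensional ℝ V]
    [AddCommGroup W] [Module ℝ W] {p : ℕ}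
    (g : LinearMap.BilinForm ℝ W) (hgsymm : ∀ x y : W, g x y = g y x)
    (b : Module.Basis (Fin (p + 1)) ℝ W)
    (hb : ∀ i j, g (b i) (b j) =
      if i = j then (if (i : ℕ) = p then (-1 : ℝ) else 1) else 0)
    (β : V →ₗ[ℝ] V →ₗ[ℝ] W) (hβsymm : ∀ x y : V, β x y = β y x)
    (hflat : ∀ w x y z : V, g (β w x) (β y z) = g (β y x) (β w z))
    (hnull : ∀ x : V, (∀ y : V, β x y = 0) → x = 0)
    (ν F : W) (hν : g ν ν = 0) (hF : g F F = 0) (hνF : g ν F = -1)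
    (hdeg : (Submodule.span ℝ {w : W | ∃ x y : V, β x y = w})
        ⊓ g.orthogonal (Submodule.span ℝ {w : W | ∃ x y : V, β x y = w})
        = Submodule.span ℝ {ν})
    (hcompat : ∀ x y : V, g (β x y) F = -⟪x, y⟫) :
    (∀ w x y z : V,
        g (β w x - ⟪w, x⟫ • ν) (β y z - ⟪y, z⟫ • ν)
          = g (β y x - ⟪y, x⟫ • ν) (β w z - ⟪w, z⟫ • ν))
      ∧ (∀ u ∈ Submodule.span ℝ {w : W | ∃ x y : V, β x y - ⟪x, y⟫ • ν = w},
          g u ν = 0 ∧ g u F = 0)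
      ∧ ∀ u ∈ Submodule.span ℝ {w : W | ∃ x y : V, β x y - ⟪x, y⟫ • ν = w},
          u ≠ 0 → 0 < g u u := by
  -- ν is g-orthogonal to all β x y
  have hνmem : ν ∈ (Submodule.span ℝ {w : W | ∃ x y : V, β x y = w})
      ⊓ g.orthogonal (Submodule.span ℝ {w : W | ∃ x y : V, β x y = w}) := by
    rw [hdeg]; exact Submodule.mem_span_singleton_self ν
  have hSν : ∀ x y : V, g (β x y) ν = 0 := by
    intro x y
    exact (LinearMap.BilinForm.mem_orthogonal_iff.mp hνmem.2) (β x y)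
      (Submodule.subset_span ⟨x, y, rfl⟩)
  have hνS : ∀ x y : V, g ν (β x y) = 0 := fun x y => by rw [hgsymm]; exact hSν x y
  -- part 2 core
  have part2 : ∀ u ∈ Submodule.span ℝ {w : W | ∃ x y : V, β x y - ⟪x, y⟫ • ν = w},
      g u ν = 0 ∧ g u F = 0 := by
    intro u hu
    induction hu using Submodule.span_induction with
    | mem w hw =>
      obtain ⟨x, y, rfl⟩ := hw
      constructor
      · simp [map_sub, map_smul, hSν, hν]
      · simp [map_sub, map_smul, hcompat, hνF]
    | zero => simp
    | add a c _ _ ha hc => simp [map_add, ha.1, ha.2, hc.1, hc.2]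
    | smul r a _ ha => simp [map_smul, ha.1, ha.2]
  refine ⟨?_, part2, ?_⟩
  · intro w x y z
    simp only [map_sub, map_smul, LinearMap.sub_apply, LinearMap.smul_apply, smul_eq_mul,
      hSν, hνS, hν, mul_zero, sub_zero]
    exact hflat w x y z
  · -- positivity
    intro u hu hune
    obtain ⟨huν, huF⟩ := part2 u hu
    -- coordinate formula for g
    have grep : ∀ v w : W, g v w =
        ∑ i : Fin (p + 1), (if (i : ℕ) = p then (-1 : ℝ) else 1) * b.repr v i * b.repr w i := by
      intro v w
      conv_lhs => rw [← b.sum_repr v, ← b.sum_repr w]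
      simp only [map_sum, LinearMap.sum_apply, map_smul, LinearMap.smul_apply,
        LinearMap.map_smul₂, smul_eq_mul, hb, mul_ite, mul_zero,
        Finset.sum_ite_eq, Finset.sum_ite_eq', Finset.mem_univ, if_true]
      refine Finset.sum_congr rfl fun i _ => ?_
      split <;> ring
    set t := ν + F with htdef
    have hut : g u t = 0 := by rw [htdef, map_add, huν, huF, add_zero]
    have htt : g t t < 0 := by
      rw [htdef]
      simp only [map_add, LinearMap.add_apply]
      rw [hν, hF, hνF, hgsymm F ν, hνF]; norm_num
    have hcne : ⇑(b.repr u) ≠ 0 := by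
      intro h
      apply hune
      have h0 : b.repr u = 0 := Finsupp.ext fun i => congrFun h i
      simpa using congrArg b.repr.symm h0
    have := lorentz_key (b.repr u) (b.repr t)
      (by rw [← grep]; exact htt) (by rw [← grep]; exact hut) hcne
    rw [grep]
    exact this
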